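/- Let M ≻ 0, D, L be real symmetric n×n matrices, β > 0, ζ ∈ [0, π/2), and suppose (i) D − 2βM ⪰ 0, (ii) L ⪰ 0, and (iii) βD − 2(cos ζ)²L ⪰ 0. Then for every quadratic eigenvalue λ with eigenvector ν of (λ²M + λD + L)ν = 0, the inequality ⟨ν, Dν⟩² − 4(cos ζ)²⟨ν, Lν⟩⟨ν, Mν⟩ ≥ 0 holds. -/

import Mathlib

open Matrix Complex

lemma aux_re_eq {n : ℕ} (A : Matrix (Fin n) (Fin n) ℝ) (v : Fin n → ℂ) :
    (star v ⬝ᵥ (A.map Complex.ofReal).mulVec v).re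
      = (fun i => (v i).re) ⬝ᵥ A.mulVec (fun i => (v i).re)
        + (fun i => (v i).im) ⬝ᵥ A.mulVec (fun i => (v i).im) := by
  simp only [dotProduct, mulVec, Pi.star_apply, Matrix.map_apply, Finset.mul_sum,
    Complex.re_sum, Complex.mul_re, Complex.ofReal_re, Complex.ofReal_im,
    RCLike.star_def, Complex.conj_re, Complex.conj_im, Complex.mul_im]
  rw [← Finset.sum_add_distrib]
  apply Finset.sum_congr rfl
  intro i _
  rw [← Finset.sum_add_distrib]
  apply Finset.sum_congr rfl
  intro j _
  ring

lemma aux_nonneg {n : ℕ} (A : Matrix (Fin n) (Fin n) ℝ) (hA : A.PosSemidef)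
    (v : Fin n → ℂ) : 0 ≤ (star v ⬝ᵥ (A.map Complex.ofReal).mulVec v).re := by
  rw [aux_re_eq]
  exact add_nonneg (hA.dotProduct_mulVec_nonneg _) (hA.dotProduct_mulVec_nonneg _)

lemma aux_pos {n : ℕ} (A : Matrix (Fin n) (Fin n) ℝ) (hA : A.PosDef)
    (v : Fin n → ℂ) (hv : v ≠ 0) :
    0 < (star v ⬝ᵥ (A.map Complex.ofReal).mulVec v).re := by
  rw [aux_re_eq]
  by_cases hx : (fun i => (v i).re) = 0
  · have hy : (fun i => (v i).im) ≠ 0 := by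
      intro hy
      apply hv
      funext i
      have hre := congrFun hx i
      have him := congrFun hy i
      simp only [Pi.zero_apply] at hre him
      exact Complex.ext hre him
    have h5 := hA.dotProduct_mulVec_pos hy
    simp only [star_trivial] at h5
    have h0 : (fun i => (v i).re) ⬝ᵥ A.mulVec (fun i => (v i).re) = 0 := by
      rw [hx]; simp
    linarith
  · have h5 := hA.dotProduct_mulVec_pos hx
    have h6 := hA.posSemidef.dotProduct_mulVec_nonneg (fun i => (v i).im)
    simp only [star_trivial] at h5 h6
    linarith

theorem stmt_8 {n : ℕ} (M D L : Matrix (Fin n) (Fin n) ℝ)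
    (hM : M.PosDef) (hD : D.IsSymm) (hL : L.IsSymm)
    (β ζ : ℝ) (hβ : 0 < β) (hζ0 : 0 ≤ ζ) (hζ1 : ζ < Real.pi / 2)
    (h1 : (D - (2 * β) • M).PosSemidef) (h2 : L.PosSemidef)
    (h3 : (β • D - (2 * Real.cos ζ ^ 2) • L).PosSemidef)
    (lam : ℂ) (ν : Fin n → ℂ) (hν : ν ≠ 0)
    (hqep : (lam ^ 2 • M.map (Complex.ofReal) + lam • D.map (Complex.ofReal)
        + L.map (Complex.ofReal)).mulVec ν = 0) :
    (star ν ⬝ᵥ (D.map (Complex.ofReal)).mulVec ν).re ^ 2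
      - 4 * Real.cos ζ ^ 2 * (star ν ⬝ᵥ (L.map (Complex.ofReal)).mulVec ν).re
        * (star ν ⬝ᵥ (M.map (Complex.ofReal)).mulVec ν).re ≥ 0 := by
  set x : Fin n → ℝ := fun i => (ν i).re
  set y : Fin n → ℝ := fun i => (ν i).im
  have hm : 0 < (star ν ⬝ᵥ (M.map Complex.ofReal).mulVec ν).re := aux_pos M hM ν hν
  have hl : 0 ≤ (star ν ⬝ᵥ (L.map Complex.ofReal).mulVec ν).re := aux_nonneg L h2 ν
  have hdm : 0 ≤ (star ν ⬝ᵥ (D.map Complex.ofReal).mulVec ν).re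
      - 2 * β * (star ν ⬝ᵥ (M.map Complex.ofReal).mulVec ν).re := by
    have h := aux_nonneg _ h1 ν
    simp only [aux_re_eq] at h ⊢
    simp only [Matrix.sub_mulVec, Matrix.smul_mulVec, dotProduct_sub,
      dotProduct_smul, smul_eq_mul] at h ⊢
    linarith
  have hdl : 0 ≤ β * (star ν ⬝ᵥ (D.map Complex.ofReal).mulVec ν).re
      - 2 * Real.cos ζ ^ 2 * (star ν ⬝ᵥ (L.map Complex.ofReal).mulVec ν).re := by
    have h := aux_nonneg _ h3 ν
    simp only [aux_re_eq] at h ⊢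
    simp only [Matrix.sub_mulVec, Matrix.smul_mulVec, dotProduct_sub,
      dotProduct_smul, smul_eq_mul] at h ⊢
    linarith
  nlinarith [mul_nonneg hdm hm.le, mul_nonneg hdl hm.le]
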